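/- Let G_b, G_r ≥ 0, σ² > 0, γ ≥ 0, ε ∈ (0, 1), P_max > 0, and fix φ₁, N > 0 with φ₁ ≠ N. Suppose P_r, P_b > 0 satisfy P_r + P_b ≤ P_max, P_r ≥ P_b, P_r·G_r ≥ γ·(P_b·G_r + σ²), and F_dl(P_r, P_b) ≥ 1 − ε. Then P_r' := P_max − P_b also satisfies P_r' ≥ P_b, P_r' + P_b = P_max, P_r'·G_r ≥ γ·(P_b·G_r + σ²), and F_dl(P_r', P_b) ≥ 1 − ε, while the objective Real.logb 2 (1 + P_b·G_b/σ²) is unchanged. Consequently, whenever problem (P2) attains its maximum, it attains it at a point with P_r + P_b = P_max. -/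

import Mathlib

open Real

/-- The closed-form minimum average detection error probability of Theorem 2 of the paper
(eq. (19)). -/
noncomputable def Fdl (Pr Pb φ1 N : ℝ) : ℝ :=
  ((Pr + Pb) / Pr) ^ (-(1 + Pr * N / (Pb * φ1))) / (Pb * φ1 / (Pr * N) + 1) + 1 -
    ((Pr + Pb) / Pr) ^ (-(Pr * N / (Pb * φ1))) -
    ((Pb / Pr) * ((Pr + Pb) / Pr) ^ (-((Pr + Pb) / Pb)) / (φ1 / N - 1)) *
      (((Pr + Pb) / Pr) ^ ((Pr / Pb) * (1 - N / φ1)) - 1)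

/-- The feasible set of the transmit power optimization problem (P2) of the paper. -/
def FeasibleP2 (Gr σ2 γ ε Pmax φ1 N : ℝ) (p : ℝ × ℝ) : Prop :=
  0 < p.1 ∧ 0 < p.2 ∧ p.1 + p.2 ≤ Pmax ∧ p.2 ≤ p.1 ∧
    γ * (p.2 * Gr + σ2) ≤ p.1 * Gr ∧ 1 - ε ≤ Fdl p.1 p.2 φ1 N


open MeasureTheory Set Filter Topology

lemma integral_exp_neg_mul_Ioi_zero {b : ℝ} (hb : 0 < b) :
    ∫ s in Ioi (0:ℝ), exp (-(b * s)) = 1 / b := by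
  have hderiv : ∀ x ∈ Ici (0:ℝ), HasDerivAt (fun x => -exp (-(b*x))/b) (exp (-(b*x))) x := by
    intro x _
    have h1 : HasDerivAt (fun x : ℝ => -(b*x)) (-b) x := by
      simpa using ((hasDerivAt_id x).const_mul b).fun_neg
    have h3 := (h1.exp.neg).div_const b
    exact h3.congr_deriv (by field_simp)
  have hint : IntegrableOn (fun x : ℝ => exp (-(b*x))) (Ioi 0) := by
    simpa [neg_mul] using exp_neg_integrableOn_Ioi 0 hb
  have htend : Tendsto (fun x => -exp (-(b*x))/b) atTop (𝓝 0) := by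
    have h0 : Tendsto (fun x : ℝ => exp (-(b*x))) atTop (𝓝 0) := by
      have hb' : Tendsto (fun x : ℝ => b * x) atTop atTop :=
        Tendsto.const_mul_atTop hb tendsto_id
      exact (tendsto_exp_neg_atTop_nhds_zero.comp hb').congr (fun x => rfl)
    have := (h0.neg).div_const b
    simpa using this
  have := integral_Ioi_of_hasDerivAt_of_tendsto' hderiv hint htend
  rw [this]
  rw [mul_zero, neg_zero, exp_zero]
  ring

noncomputable def phi (a u : ℝ) : ℝ := (exp (-(a*u)) - a * exp (-u)) / (1-a)

lemma phi_anti {a : ℝ} (ha : 0 < a) (hane : a ≠ 1) : AntitoneOn (phi a) (Ici 0) := by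
  have hderiv : ∀ u : ℝ, HasDerivAt (phi a)
      ((a * exp (-u) - a * exp (-(a*u))) / (1-a)) u := by
    intro u
    have h1 : HasDerivAt (fun u : ℝ => exp (-(a*u))) (exp (-(a*u)) * (-a)) u := by
      have : HasDerivAt (fun u : ℝ => -(a*u)) (-a) u := by
        simpa using ((hasDerivAt_id u).const_mul a).fun_neg
      exact this.exp
    have h2 : HasDerivAt (fun u : ℝ => a * exp (-u)) (a * (exp (-u) * (-1))) u := by
      have : HasDerivAt (fun u : ℝ => -u) (-1) u := by simpa using (hasDerivAt_id u).fun_neg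
      exact (this.exp).const_mul a
    have := (h1.sub h2).div_const (1-a)
    exact this.congr_deriv (by ring)
  apply antitoneOn_of_deriv_nonpos (convex_Ici 0)
  · exact Continuous.continuousOn (by unfold phi; fun_prop)
  · intro x _
    exact (hderiv x).differentiableAt.differentiableWithinAt
  · intro x hx
    rw [interior_Ici] at hx
    rw [(hderiv x).deriv]
    rcases lt_or_gt_of_ne hane with h | h
    · apply div_nonpos_of_nonpos_of_nonneg _ (by linarith)
      have : exp (-x) ≤ exp (-(a*x)) := by
        apply exp_le_exp.mpr; nlinarith [(show (0:ℝ) < x from hx).le]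
      nlinarith
    · apply div_nonpos_of_nonneg_of_nonpos _ (by linarith)
      have : exp (-(a*x)) ≤ exp (-x) := by
        apply exp_le_exp.mpr; nlinarith [(show (0:ℝ) < x from hx).le]
      nlinarith

noncomputable def Gc (t a : ℝ) : ℝ :=
  ((1+t) ^ (-(a/t)) / (1 + a/t) - a * (1+t) ^ (-(1/t)) / (1 + 1/t)) / (1-a)

lemma hfun_lemma {t : ℝ} (a : ℝ) (ht : 0 < t) (s : ℝ) :
    exp (-s) * phi a ((s + log (1+t))/t)
      = exp (-(a/t*log (1+t))) * exp (-((1+a/t)*s)) / (1-a)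
        - a * (exp (-(1/t*log (1+t))) * exp (-((1+1/t)*s))) / (1-a) := by
  have key : ∀ c : ℝ, exp (-s) * exp (-(c*((s+log (1+t))/t)))
      = exp (-(c/t*log (1+t))) * exp (-((1+c/t)*s)) := by
    intro c
    rw [← exp_add, ← exp_add]
    congr 1
    field_simp
    ring
  have k1 := key a
  have k2 := key 1
  rw [one_mul] at k2
  unfold phi
  have expand : exp (-s) * ((exp (-(a*((s + log (1+t))/t))) - a * exp (-((s + log (1+t))/t))) / (1-a))
      = exp (-s) * exp (-(a*((s + log (1+t))/t))) / (1-a)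
        - a * (exp (-s) * exp (-((s + log (1+t))/t))) / (1-a) := by ring
  rw [expand, k1, k2]

lemma integrable_aux {t a : ℝ} (ht : 0 < t) (ha : 0 < a) :
    IntegrableOn (fun s => exp (-s) * phi a ((s + log (1+t))/t)) (Ioi (0:ℝ)) := by
  have hb1 : (0:ℝ) < 1 + a/t := by positivity
  have hb2 : (0:ℝ) < 1 + 1/t := by positivity
  have e1 : IntegrableOn (fun s : ℝ => exp (-((1+a/t)*s))) (Ioi (0:ℝ))     := by
    have := exp_neg_integrableOn_Ioi 0 hb1
    simp only [neg_mul] at this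
    exact this
  have e2 : IntegrableOn (fun s : ℝ => exp (-((1+1/t)*s))) (Ioi (0:ℝ))     := by
    have := exp_neg_integrableOn_Ioi 0 hb2
    simp only [neg_mul] at this
    exact this
  have h3 : IntegrableOn (fun s : ℝ =>
      exp (-(a/t*log (1+t))) * exp (-((1+a/t)*s)) / (1-a)
        - a * (exp (-(1/t*log (1+t))) * exp (-((1+1/t)*s))) / (1-a)) (Ioi (0:ℝ)) :=
    (((e1.const_mul (exp (-(a/t*log (1+t))))).div_const (1-a)).sub
      (((e2.const_mul (exp (-(1/t*log (1+t))))).const_mul a).div_const (1-a)))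
  exact h3.congr_fun (fun s _ => (hfun_lemma a ht s).symm) measurableSet_Ioi

lemma Gc_eq_integral {t a : ℝ} (ht : 0 < t) (ha : 0 < a) :
    ∫ s in Ioi (0:ℝ), exp (-s) * phi a ((s + log (1+t))/t) = Gc t a := by
  have hpt : (0:ℝ) < 1 + t := by linarith
  have hb1 : (0:ℝ) < 1 + a/t := by positivity
  have hb2 : (0:ℝ) < 1 + 1/t := by positivity
  have e1 : IntegrableOn (fun s : ℝ => exp (-((1+a/t)*s))) (Ioi (0:ℝ))     := by
    have := exp_neg_integrableOn_Ioi 0 hb1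
    simp only [neg_mul] at this
    exact this
  have e2 : IntegrableOn (fun s : ℝ => exp (-((1+1/t)*s))) (Ioi (0:ℝ))     := by
    have := exp_neg_integrableOn_Ioi 0 hb2
    simp only [neg_mul] at this
    exact this
  rw [setIntegral_congr_fun measurableSet_Ioi (fun s _ => hfun_lemma a ht s)]
  rw [integral_sub (((e1.const_mul _).div_const _))
      ((((e2.const_mul _).const_mul a).div_const _))]
  rw [integral_div, integral_div, integral_const_mul, integral_const_mul, integral_const_mul]
  rw [integral_exp_neg_mul_Ioi_zero hb1, integral_exp_neg_mul_Ioi_zero hb2]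
  have hA : (1+t:ℝ) ^ (-(a/t)) = exp (-(a/t*log (1+t))) := by
    rw [rpow_def_of_pos hpt]; congr 1; ring
  have hB : (1+t:ℝ) ^ (-(1/t)) = exp (-(1/t*log (1+t))) := by
    rw [rpow_def_of_pos hpt]; congr 1; ring
  unfold Gc
  rw [hA, hB]
  ring

lemma Gc_mono {a t t' : ℝ} (ha : 0 < a) (hane : a ≠ 1) (ht' : 0 < t') (htt : t' ≤ t) :
    Gc t' a ≤ Gc t a := by
  have ht : 0 < t := lt_of_lt_of_le ht' htt
  rw [← Gc_eq_integral ht ha, ← Gc_eq_integral ht' ha]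
  apply setIntegral_mono_on (integrable_aux ht' ha) (integrable_aux ht ha) measurableSet_Ioi
  intro s hs
  have hs0 : (0:ℝ) < s := hs
  have hlog : (0:ℝ) ≤ log (1+t) := log_nonneg (by linarith)
  have hlog' : (0:ℝ) ≤ log (1+t') := log_nonneg (by linarith)
  have mem1 : (s + log (1+t))/t ∈ Ici (0:ℝ) := by
    apply div_nonneg (by linarith) ht.le
  have mem2 : (s + log (1+t'))/t' ∈ Ici (0:ℝ) := by
    apply div_nonneg (by linarith) ht'.le
  have hkey : t' * log (1+t) ≤ t * log (1+t') := by
    have hb : (1+t:ℝ) ≤ (1+t') ^ (t/t') := by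
      have h1 : (1:ℝ) ≤ t/t' := (one_le_div ht').mpr htt
      have := one_add_mul_self_le_rpow_one_add (by linarith : (-1:ℝ) ≤ t') h1
      calc (1+t:ℝ) = 1 + t/t' * t' := by field_simp
        _ ≤ (1+t') ^ (t/t') := this
    have hl : log (1+t) ≤ (t/t') * log (1+t') := by
      have := Real.log_le_log (by linarith) hb
      rwa [Real.log_rpow (by linarith)] at this
    calc t' * log (1+t) ≤ t' * ((t/t') * log (1+t')) := by
          apply mul_le_mul_of_nonneg_left hl ht'.le
      _ = t * log (1+t') := by field_simp
  have harg : (s + log (1+t))/t ≤ (s + log (1+t'))/t' := by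
    rw [div_le_div_iff₀ ht ht']
    have : t' * s ≤ t * s := by nlinarith
    nlinarith
  have := phi_anti ha hane mem1 mem2 harg
  exact mul_le_mul_of_nonneg_left this (exp_pos _).le

set_option maxHeartbeats 1600000 in
lemma Fdl_eq_aux {t a : ℝ} (ht : 0 < t) (ha : 0 < a) (hane : a ≠ 1) :
    (1+t) ^ (-(1 + a/t)) / (t/a + 1) + 1 - (1+t) ^ (-(a/t))
      - (t * (1+t) ^ (-(1+1/t)) / (1/a - 1)) * ((1+t) ^ ((1-a)/t) - 1)
    = 1 - Gc t a := by
  have hpt : (0:ℝ) < 1 + t := by linarith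
  have r1 : (1+t) ^ (-(1+a/t)) = (1+t) ^ (-(a/t)) / (1+t) := by
    rw [show -(1+a/t) = -(a/t) + (-1) by ring, rpow_add hpt, rpow_neg_one]
    ring
  have r2 : (1+t) ^ (-(1+1/t)) = (1+t) ^ (-(1/t)) / (1+t) := by
    rw [show -(1+1/t) = -(1/t) + (-1) by ring, rpow_add hpt, rpow_neg_one]
    ring
  have r3 : (1+t) ^ ((1-a)/t) = (1+t) ^ (-(a/t)) / (1+t) ^ (-(1/t)) := by
    have hinv : (1+t) ^ ((1:ℝ)/t) = ((1+t) ^ (-(1/t)))⁻¹ := by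
      rw [rpow_neg hpt.le, inv_inv]
    rw [show (1-a)/t = -(a/t) + 1/t by ring, rpow_add hpt, hinv]
    ring
  unfold Gc
  rw [r1, r2, r3]
  obtain ⟨A, hApos, hA⟩ : ∃ A, 0 < A ∧ (1+t) ^ (-(a/t)) = A :=
    ⟨_, rpow_pos_of_pos hpt _, rfl⟩
  obtain ⟨B, hBpos, hB⟩ : ∃ B, 0 < B ∧ (1+t) ^ (-(1/t)) = B :=
    ⟨_, rpow_pos_of_pos hpt _, rfl⟩
  rw [hA, hB]
  have h1a : (1:ℝ) - a ≠ 0 := sub_ne_zero.mpr (Ne.symm hane)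
  have hta : t/a + 1 ≠ 0 := by positivity
  have h1at : 1 + a/t ≠ 0 := by positivity
  have h1t : (1:ℝ) + 1/t ≠ 0 := by positivity
  have hia : 1/a - 1 ≠ 0 := by
    intro h
    have : 1/a = 1 := by linarith
    rw [div_eq_one_iff_eq ha.ne'] at this
    exact hane this.symm
  field_simp
  ring

lemma Fdl_eq {Pr Pb φ1 N : ℝ} (hPr : 0 < Pr) (hPb : 0 < Pb) (hφ1 : 0 < φ1) (hN : 0 < N)
    (hne : φ1 ≠ N) : Fdl Pr Pb φ1 N = 1 - Gc (Pb/Pr) (N/φ1) := by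
  set t := Pb/Pr with htdef
  set a := N/φ1 with hadef
  have ht : 0 < t := div_pos hPb hPr
  have ha : 0 < a := div_pos hN hφ1
  have hane : a ≠ 1 := by
    rw [hadef]
    intro h
    exact hne ((div_eq_one_iff_eq hφ1.ne').mp h).symm
  have hk : (Pr+Pb)/Pr = 1 + t := by rw [htdef]; field_simp
  have e1 : Pr*N/(Pb*φ1) = a/t := by rw [hadef, htdef]; field_simp
  have e2 : Pb*φ1/(Pr*N) = t/a := by rw [hadef, htdef]; field_simp
  have e3 : (Pr+Pb)/Pb = 1 + 1/t := by rw [htdef]; field_simp; ring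
  have e5 : Pr/Pb * (1 - N/φ1) = (1-a)/t := by rw [hadef, htdef]; field_simp
  have e6 : φ1/N - 1 = 1/a - 1 := by rw [hadef]; rw [one_div_div]
  unfold Fdl
  rw [hk, e1, e2, e3, e5, e6]
  exact Fdl_eq_aux ht ha hane

lemma Fdl_mono {Pb φ1 N Pr Pr' : ℝ} (hPb : 0 < Pb) (hφ1 : 0 < φ1) (hN : 0 < N)
    (hne : φ1 ≠ N) (hPr : 0 < Pr) (h : Pr ≤ Pr') :
    Fdl Pr Pb φ1 N ≤ Fdl Pr' Pb φ1 N := by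
  have hPr' : 0 < Pr' := lt_of_lt_of_le hPr h
  rw [Fdl_eq hPr hPb hφ1 hN hne, Fdl_eq hPr' hPb hφ1 hN hne]
  have hane : N/φ1 ≠ 1 := by
    intro hh
    exact hne ((div_eq_one_iff_eq hφ1.ne').mp hh).symm
  have hmono : Gc (Pb/Pr') (N/φ1) ≤ Gc (Pb/Pr) (N/φ1) := by
    apply Gc_mono (div_pos hN hφ1) hane (div_pos hPb hPr')
    gcongr
  linarith

/-- Proposition 1 of the paper: replacing `P_r` by `P_max − P_b` preserves feasibility of
problem (P2) and the covert-rate objective; consequently, whenever (P2) attains its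
maximum, it attains it at a point with full power `P_r + P_b = P_max`. -/
theorem P2_max_attained_at_full_power
    (Gb Gr σ2 γ ε Pmax φ1 N : ℝ)
    (hGb : 0 ≤ Gb) (hGr : 0 ≤ Gr) (hσ2 : 0 < σ2) (hγ : 0 ≤ γ)
    (hε : ε ∈ Set.Ioo (0 : ℝ) 1) (hPmax : 0 < Pmax) (hφ1 : 0 < φ1) (hN : 0 < N)
    (hne : φ1 ≠ N)
    (Pr Pb : ℝ) (hPr : 0 < Pr) (hPb : 0 < Pb)
    (hsum : Pr + Pb ≤ Pmax) (hord : Pb ≤ Pr)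
    (hqos : γ * (Pb * Gr + σ2) ≤ Pr * Gr)
    (hcov : 1 - ε ≤ Fdl Pr Pb φ1 N) :
    (Pb ≤ Pmax - Pb ∧ (Pmax - Pb) + Pb = Pmax ∧
      γ * (Pb * Gr + σ2) ≤ (Pmax - Pb) * Gr ∧
      1 - ε ≤ Fdl (Pmax - Pb) Pb φ1 N ∧
      Real.logb 2 (1 + Pb * Gb / σ2) = Real.logb 2 (1 + Pb * Gb / σ2)) ∧
    ((∃ p, FeasibleP2 Gr σ2 γ ε Pmax φ1 N p ∧
        ∀ q, FeasibleP2 Gr σ2 γ ε Pmax φ1 N q →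
          Real.logb 2 (1 + q.2 * Gb / σ2) ≤ Real.logb 2 (1 + p.2 * Gb / σ2)) →
      ∃ p, FeasibleP2 Gr σ2 γ ε Pmax φ1 N p ∧ p.1 + p.2 = Pmax ∧
        ∀ q, FeasibleP2 Gr σ2 γ ε Pmax φ1 N q →
          Real.logb 2 (1 + q.2 * Gb / σ2) ≤ Real.logb 2 (1 + p.2 * Gb / σ2)) := by
  constructor
  · have hPrle : Pr ≤ Pmax - Pb := by linarith
    refine ⟨by linarith, by ring, ?_, ?_, rfl⟩
    · exact hqos.trans (mul_le_mul_of_nonneg_right hPrle hGr)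
    · exact hcov.trans (Fdl_mono hPb hφ1 hN hne hPr hPrle)
  · rintro ⟨p, hp, hopt⟩
    obtain ⟨h1, h2, h3, h4, h5, h6⟩ := hp
    have hple : p.1 ≤ Pmax - p.2 := by linarith
    refine ⟨(Pmax - p.2, p.2), ⟨by simp; linarith, h2, by simp, by simp; linarith,
      ?_, ?_⟩, by simp, ?_⟩
    · exact h5.trans (mul_le_mul_of_nonneg_right hple hGr)
    · exact h6.trans (Fdl_mono h2 hφ1 hN hne h1 hple)
    · intro q hq
      exact hopt q hq
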